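/- With G = k^× × K₁ × K₂ the Heisenberg-type group of type (d₁,…,d_p), a weight-n G-module is irreducible if and only if it has dimension D_n = (d₁⋯d_p)/(gcd(n,d₁)⋯gcd(n,d_p)). -/

import Mathlib

abbrev ThetaK1 (p : ℕ) (d : Fin p → ℕ) : Type := ∀ i : Fin p, Multiplicative (ZMod (d i))

abbrev ThetaK2 (k : Type) [Field k] (p : ℕ) (d : Fin p → ℕ) : Type := ThetaK1 p d →* kˣ

def Heis (k : Type) [Field k] (p : ℕ) (d : Fin p → ℕ) : Type :=
  kˣ × ThetaK1 p d × ThetaK2 k p d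

namespace Heis

variable {k : Type} [Field k] {p : ℕ} {d : Fin p → ℕ}

def mk (α : kˣ) (x : ThetaK1 p d) (χ : ThetaK2 k p d) : Heis k p d := (α, x, χ)

instance : Mul (Heis k p d) :=
  ⟨fun a b => (a.1 * b.1 * b.2.2 a.2.1, a.2.1 * b.2.1, a.2.2 * b.2.2)⟩

instance : One (Heis k p d) := ⟨((1 : kˣ), 1, 1)⟩

instance : Inv (Heis k p d) := ⟨fun a => (a.1⁻¹ * a.2.2 a.2.1, a.2.1⁻¹, a.2.2⁻¹)⟩

theorem mul_def (a b : Heis k p d) :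
    a * b = (a.1 * b.1 * b.2.2 a.2.1, a.2.1 * b.2.1, a.2.2 * b.2.2) := rfl

theorem one_def : (1 : Heis k p d) = ((1 : kˣ), 1, 1) := rfl

theorem inv_def (a : Heis k p d) :
    a⁻¹ = (a.1⁻¹ * a.2.2 a.2.1, a.2.1⁻¹, a.2.2⁻¹) := rfl

theorem mul_assoc' (a b c : Heis k p d) : a * b * c = a * (b * c) := by
  obtain ⟨α, x, χ⟩ := a
  obtain ⟨β, y, ψ⟩ := b
  obtain ⟨γ, z, ω⟩ := c
  refine Prod.ext ?_ (Prod.ext ?_ ?_)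
  · show α * β * ψ x * γ * (ω (x * y)) = α * (β * γ * ω y) * ((ψ * ω) x)
    simp [map_mul, MonoidHom.mul_apply, mul_assoc, mul_comm, mul_left_comm]
  · exact mul_assoc x y z
  · exact mul_assoc χ ψ ω

theorem one_mul' (a : Heis k p d) : 1 * a = a := by
  obtain ⟨α, x, χ⟩ := a
  refine Prod.ext ?_ (Prod.ext ?_ ?_)
  · show 1 * α * χ 1 = α
    simp
  · exact one_mul x
  · exact one_mul χ

theorem mul_one' (a : Heis k p d) : a * 1 = a := by
  obtain ⟨α, x, χ⟩ := a
  refine Prod.ext ?_ (Prod.ext ?_ ?_)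
  · show α * 1 * (1 : ThetaK2 k p d) x = α
    simp
  · exact mul_one x
  · exact mul_one χ

theorem inv_mul_cancel' (a : Heis k p d) : a⁻¹ * a = 1 := by
  obtain ⟨α, x, χ⟩ := a
  refine Prod.ext ?_ (Prod.ext ?_ ?_)
  · show α⁻¹ * χ x * α * χ (x⁻¹) = 1
    simp [map_inv, mul_comm, mul_left_comm]
  · exact inv_mul_cancel x
  · exact inv_mul_cancel χ

instance : Group (Heis k p d) where
  mul_assoc := mul_assoc'
  one_mul := one_mul'
  mul_one := mul_one'
  inv_mul_cancel := inv_mul_cancel'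

/-- The multiplication rule of the Heisenberg-type group. -/
theorem mk_mul (α β : kˣ) (x y : ThetaK1 p d) (χ ψ : ThetaK2 k p d) :
    mk α x χ * mk β y ψ = mk (α * β * ψ x) (x * y) (χ * ψ) := rfl

end Heis

section Reps

variable {k : Type} [Field k]

/-- A subspace stable under a representation. -/
def RepStable {G V : Type} [Group G] [AddCommGroup V] [Module k V]
    (ρ : G →* (V →ₗ[k] V)ˣ) (W : Submodule k V) : Prop :=
  ∀ (g : G), ∀ w ∈ W, (ρ g : V →ₗ[k] V) w ∈ W

/-- Irreducibility: nonzero and no nontrivial stable subspace. -/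
def RepIrred {G V : Type} [Group G] [AddCommGroup V] [Module k V]
    (ρ : G →* (V →ₗ[k] V)ˣ) : Prop :=
  (∃ v : V, v ≠ 0) ∧
  ∀ W : Submodule k V, RepStable ρ W → W = ⊥ ∨ W = ⊤

/-- Isomorphism of representations of `G`. -/
def RepIso {G V W : Type} [Group G] [AddCommGroup V] [Module k V]
    [AddCommGroup W] [Module k W]
    (ρ : G →* (V →ₗ[k] V)ˣ) (τ : G →* (W →ₗ[k] W)ˣ) : Prop :=
  ∃ e : V ≃ₗ[k] W, ∀ (g : G) (v : V), e ((ρ g : V →ₗ[k] V) v) = (τ g : W →ₗ[k] W) (e v)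

variable {p : ℕ} {d : Fin p → ℕ}

/-- A representation of the Heisenberg-type group has weight `n` if `kˣ ⊆ G` acts through the
character `α ↦ αⁿ`. -/
def IsWeight (n : ℤ) {V : Type} [AddCommGroup V] [Module k V]
    (ρ : Heis k p d →* (V →ₗ[k] V)ˣ) : Prop :=
  ∀ (α : kˣ) (v : V), (ρ (Heis.mk α 1 1) : V →ₗ[k] V) v = ((α ^ n : kˣ) : k) • v

/-- `D n = (d₁⋯d_p)/(gcd(n,d₁)⋯gcd(n,d_p))`. -/
def ThetaD (p : ℕ) (d : Fin p → ℕ) (n : ℤ) : ℕ :=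
  (∏ i, d i) / ∏ i, Int.gcd n (d i)

end Reps

theorem aux_exists_common_eigenvector {k : Type} [Field k] [IsAlgClosed k]
    (V : Type) [AddCommGroup V] [Module k V] [FiniteDimensional k V] [Nontrivial V]
    (l : List (V →ₗ[k] V)) (hl : ∀ f ∈ l, ∀ g ∈ l, Commute f g) :
    ∃ v : V, v ≠ 0 ∧ ∀ f ∈ l, ∃ c : k, f v = c • v := by
  match l with
  | [] =>
    obtain ⟨v, hv⟩ := exists_ne (0 : V)
    exact ⟨v, hv, by simp⟩
  | f :: t =>
    obtain ⟨μ, hμ⟩ := Module.End.exists_eigenvalue (f : Module.End k V)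
    set E := Module.End.eigenspace f μ with hEdef
    haveI : Nontrivial E := Submodule.nontrivial_iff_ne_bot.mpr hμ
    have hmem : ∀ g ∈ t, ∀ v ∈ E, g v ∈ E := by
      intro g hg v hv
      have hcomm := hl f (by simp) g (by simp [hg])
      rw [hEdef, Module.End.mem_eigenspace_iff] at hv ⊢
      calc f (g v) = (f * g) v := rfl
        _ = (g * f) v := by rw [hcomm.eq]
        _ = μ • g v := by rw [Module.End.mul_apply, hv, map_smul]
    let t' : List (E →ₗ[k] E) := t.attach.map (fun g => g.1.restrict (hmem g.1 g.2))
    have hl' : ∀ f' ∈ t', ∀ g' ∈ t', Commute f' g' := by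
      intro f' hf' g' hg'
      obtain ⟨a, _, rfl⟩ := List.mem_map.mp hf'
      obtain ⟨b, _, rfl⟩ := List.mem_map.mp hg'
      have hab : Commute a.1 b.1 := hl a.1 (by simp [a.2]) b.1 (by simp [b.2])
      refine LinearMap.ext fun x => Subtype.ext ?_
      show (((a.1.restrict (hmem a.1 a.2)) ((b.1.restrict (hmem b.1 b.2)) x)) : V) = (((b.1.restrict (hmem b.1 b.2)) ((a.1.restrict (hmem a.1 a.2)) x)) : V)
      rw [LinearMap.restrict_coe_apply, LinearMap.restrict_coe_apply,
        LinearMap.restrict_coe_apply, LinearMap.restrict_coe_apply]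
      have := DFunLike.congr_fun hab.eq (x : V)
      simpa using this
    obtain ⟨w, hw0, hwspec⟩ := aux_exists_common_eigenvector E t' hl'
    refine ⟨(w : V), by simpa using hw0, ?_⟩
    intro g hg
    rcases List.mem_cons.mp hg with rfl | hgt
    · exact ⟨μ, Module.End.mem_eigenspace_iff.mp w.2⟩
    · have hmem' : g.restrict (hmem g hgt) ∈ t' :=
        List.mem_map.mpr ⟨⟨g, hgt⟩, List.mem_attach _ _, rfl⟩
      obtain ⟨c, hc⟩ := hwspec _ hmem'
      refine ⟨c, ?_⟩
      have := congrArg (Subtype.val) hc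
      rw [LinearMap.restrict_coe_apply] at this
      simpa using this
termination_by l.length
namespace Stmt6Aux

open Finset

variable {k : Type} [Field k] {p : ℕ} {d : Fin p → ℕ}
variable {n : ℤ} {V : Type} [AddCommGroup V] [Module k V]


theorem k2_one_mul (χ : ThetaK2 k p d) : (1 : ThetaK2 k p d) * χ = χ :=
  MonoidHom.ext fun y => by simp

theorem k2_mul_one (χ : ThetaK2 k p d) : χ * (1 : ThetaK2 k p d) = χ :=
  MonoidHom.ext fun y => by simp

/-- The operator by which `x ∈ K₁` acts. -/
def Aop (ρ : Heis k p d →* (V →ₗ[k] V)ˣ) (x : ThetaK1 p d) : V →ₗ[k] V :=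
  (ρ (Heis.mk 1 x 1) : V →ₗ[k] V)

/-- The operator by which `χ ∈ K₂` acts. -/
def Bop (ρ : Heis k p d →* (V →ₗ[k] V)ˣ) (χ : ThetaK2 k p d) : V →ₗ[k] V :=
  (ρ (Heis.mk 1 1 χ) : V →ₗ[k] V)

theorem mk_decomp (α : kˣ) (x : ThetaK1 p d) (χ : ThetaK2 k p d) :
    Heis.mk α x χ = Heis.mk α 1 1 * (Heis.mk 1 1 χ * Heis.mk 1 x 1) := by
  rw [Heis.mk_mul, Heis.mk_mul]
  simp only [one_mul, mul_one, map_one, MonoidHom.one_apply, k2_one_mul, k2_mul_one]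

variable (ρ : Heis k p d →* (V →ₗ[k] V)ˣ)

theorem rho_decomp (hw : IsWeight n ρ) (α : kˣ) (x : ThetaK1 p d) (χ : ThetaK2 k p d) (v : V) :
    (ρ (Heis.mk α x χ) : V →ₗ[k] V) v = ((α ^ n : kˣ) : k) • Bop ρ χ (Aop ρ x v) := by
  rw [mk_decomp, map_mul, map_mul, Units.val_mul, Units.val_mul, Module.End.mul_apply,
    Module.End.mul_apply, hw]
  rfl

theorem Bop_one (v : V) : Bop ρ 1 v = v := by
  have : Heis.mk (1 : kˣ) (1 : ThetaK1 p d) (1 : ThetaK2 k p d) = 1 := rfl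
  rw [Bop, this, map_one, Units.val_one, Module.End.one_apply]

theorem Aop_aop (hw : IsWeight n ρ) (x y : ThetaK1 p d) (v : V) :
    Aop ρ x (Aop ρ y v) = Aop ρ (x * y) v := by
  have h1 : Heis.mk (1:kˣ) x (1 : ThetaK2 k p d) * Heis.mk 1 y 1 = Heis.mk 1 (x*y) 1 := by
    rw [Heis.mk_mul]; simp only [one_mul, mul_one, map_one, MonoidHom.one_apply, k2_one_mul, k2_mul_one]
  rw [Aop, Aop, ← Module.End.mul_apply, ← Units.val_mul, ← map_mul, h1]
  rfl

theorem Bop_bop (x y : ThetaK2 k p d) (v : V) :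
    Bop ρ x (Bop ρ y v) = Bop ρ (x * y) v := by
  have h1 : Heis.mk (1:kˣ) (1 : ThetaK1 p d) x * Heis.mk 1 1 y = Heis.mk 1 1 (x*y) := by
    rw [Heis.mk_mul]; simp only [one_mul, mul_one, map_one, MonoidHom.one_apply, k2_one_mul, k2_mul_one]
  rw [Bop, Bop, ← Module.End.mul_apply, ← Units.val_mul, ← map_mul, h1]
  rfl

theorem Aop_one (hw : IsWeight n ρ) (v : V) : Aop ρ 1 v = v := by
  have : Heis.mk (1 : kˣ) (1 : ThetaK1 p d) (1 : ThetaK2 k p d) = 1 := rfl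
  rw [Aop, this, map_one, Units.val_one, Module.End.one_apply]

theorem exchange (hw : IsWeight n ρ) (x : ThetaK1 p d) (χ : ThetaK2 k p d) (v : V) :
    Aop ρ x (Bop ρ χ v) = ((χ x ^ n : kˣ) : k) • Bop ρ χ (Aop ρ x v) := by
  have h1 : Heis.mk (1:kˣ) x (1 : ThetaK2 k p d) * Heis.mk 1 1 χ = Heis.mk (χ x) x χ := by
    rw [Heis.mk_mul]; simp only [one_mul, mul_one, map_one, MonoidHom.one_apply, k2_one_mul, k2_mul_one]
  rw [Aop, Bop, ← Module.End.mul_apply, ← Units.val_mul, ← map_mul, h1, rho_decomp ρ hw]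
  rfl

/-- `v` is a common eigenvector for the `K₁`-action, with character `σ`. -/
def IsEig (σ : ThetaK2 k p d) (v : V) : Prop :=
  ∀ x : ThetaK1 p d, Aop ρ x v = ((σ x : kˣ) : k) • v

theorem IsEig.bop {σ : ThetaK2 k p d} {v : V} (hw : IsWeight n ρ) (h : IsEig ρ σ v)
    (χ : ThetaK2 k p d) : IsEig ρ (χ ^ n * σ) (Bop ρ χ v) := by
  intro x
  rw [exchange ρ hw, h x, map_smul, smul_smul]
  rfl

end Stmt6Aux
namespace Stmt6Aux

open Finset

variable {k : Type} [Field k] {p : ℕ} {d : Fin p → ℕ}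
variable {n : ℤ} {V : Type} [AddCommGroup V] [Module k V]
variable [∀ i : Fin p, NeZero (d i)]

theorem charSum {σ : ThetaK2 k p d} (hσ : σ ≠ 1) :
    ∑ x : ThetaK1 p d, ((σ x : kˣ) : k) = 0 := by
  have hx0 : ∃ x₀, σ x₀ ≠ 1 := by
    by_contra h
    push_neg at h
    exact hσ (MonoidHom.ext fun x => h x)
  obtain ⟨x₀, hx₀⟩ := hx0
  have key : ∑ x : ThetaK1 p d, ((σ (x₀ * x) : kˣ) : k)
      = ∑ x : ThetaK1 p d, ((σ x : kˣ) : k) :=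
    Equiv.sum_comp (Equiv.mulLeft x₀) (fun x => ((σ x : kˣ) : k))
  have key2 : ∑ x : ThetaK1 p d, ((σ (x₀ * x) : kˣ) : k)
      = ((σ x₀ : kˣ) : k) * ∑ x : ThetaK1 p d, ((σ x : kˣ) : k) := by
    rw [Finset.mul_sum]
    refine Finset.sum_congr rfl fun x _ => ?_
    rw [map_mul, Units.val_mul]
  have h3 : (((σ x₀ : kˣ) : k) - 1) * ∑ x : ThetaK1 p d, ((σ x : kˣ) : k) = 0 := by
    rw [sub_mul, one_mul, ← key2, key, sub_self]
  rcases mul_eq_zero.mp h3 with h | h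
  · exact absurd (Units.ext (by simpa using sub_eq_zero.mp h)) hx₀
  · exact h

theorem dualSum [Fintype (ThetaK2 k p d)] {x : ThetaK1 p d}
    (hsep : ∃ σ₀ : ThetaK2 k p d, σ₀ x ≠ 1) :
    ∑ σ : ThetaK2 k p d, ((σ x : kˣ) : k) = 0 := by
  obtain ⟨σ₀, hσ₀⟩ := hsep
  have key : ∑ σ : ThetaK2 k p d, (((σ₀ * σ) x : kˣ) : k)
      = ∑ σ : ThetaK2 k p d, ((σ x : kˣ) : k) :=
    Equiv.sum_comp (Equiv.mulLeft σ₀) (fun σ => ((σ x : kˣ) : k))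
  have key2 : ∑ σ : ThetaK2 k p d, (((σ₀ * σ) x : kˣ) : k)
      = ((σ₀ x : kˣ) : k) * ∑ σ : ThetaK2 k p d, ((σ x : kˣ) : k) := by
    rw [Finset.mul_sum]
    refine Finset.sum_congr rfl fun σ _ => ?_
    rw [MonoidHom.mul_apply, Units.val_mul]
  have h3 : (((σ₀ x : kˣ) : k) - 1) * ∑ σ : ThetaK2 k p d, ((σ x : kˣ) : k) = 0 := by
    rw [sub_mul, one_mul, ← key2, key, sub_self]
  rcases mul_eq_zero.mp h3 with h | h
  · exact absurd (Units.ext (by simpa using sub_eq_zero.mp h)) hσ₀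
  · exact h

variable (ρ : Heis k p d →* (V →ₗ[k] V)ˣ)

/-- The projector onto the `σ`-eigenspace of the `K₁`-action. -/
noncomputable def Pop (σ : ThetaK2 k p d) : V →ₗ[k] V :=
  (Fintype.card (ThetaK1 p d) : k)⁻¹ •
    ∑ x : ThetaK1 p d, (((σ x)⁻¹ : kˣ) : k) • Aop ρ x

theorem Pop_apply (σ : ThetaK2 k p d) (v : V) :
    Pop ρ σ v = (Fintype.card (ThetaK1 p d) : k)⁻¹ •
      ∑ x : ThetaK1 p d, (((σ x)⁻¹ : kˣ) : k) • Aop ρ x v := by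
  simp [Pop, LinearMap.sum_apply]

theorem Pop_eig_self (hcard : (Fintype.card (ThetaK1 p d) : k) ≠ 0)
    {σ : ThetaK2 k p d} {v : V} (hv : IsEig ρ σ v) : Pop ρ σ v = v := by
  rw [Pop_apply]
  have : ∀ x : ThetaK1 p d, (((σ x)⁻¹ : kˣ) : k) • Aop ρ x v = v := by
    intro x
    rw [hv x, smul_smul, ← Units.val_mul, inv_mul_cancel, Units.val_one, one_smul]
  rw [Finset.sum_congr rfl fun x _ => this x, Finset.sum_const, Finset.card_univ,
    ← Nat.cast_smul_eq_nsmul k, smul_smul, inv_mul_cancel₀ hcard, one_smul]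

theorem Pop_eig_ne {σ τ : ThetaK2 k p d} {v : V} (hv : IsEig ρ τ v) (hne : σ ≠ τ) :
    Pop ρ σ v = 0 := by
  rw [Pop_apply]
  have : ∀ x : ThetaK1 p d, (((σ x)⁻¹ : kˣ) : k) • Aop ρ x v
      = (((σ⁻¹ * τ) x : kˣ) : k) • v := by
    intro x
    rw [hv x, smul_smul, MonoidHom.mul_apply, MonoidHom.inv_apply, Units.val_mul]
  rw [Finset.sum_congr rfl fun x _ => this x, ← Finset.sum_smul, charSum, zero_smul, smul_zero]
  intro h
  exact hne (inv_mul_eq_one.mp h)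

end Stmt6Aux
namespace Stmt6Aux

open Finset

variable {k : Type} [Field k] {p : ℕ} {d : Fin p → ℕ}
variable {n : ℤ} {V : Type} [AddCommGroup V] [Module k V]
variable [∀ i : Fin p, NeZero (d i)]
variable (ρ : Heis k p d →* (V →ₗ[k] V)ˣ)

theorem Pop_eig (hw : IsWeight n ρ) (σ : ThetaK2 k p d) (v : V) :
    IsEig ρ σ (Pop ρ σ v) := by
  intro y
  rw [Pop_apply, map_smul, map_sum]
  have h1 : ∀ x : ThetaK1 p d, Aop ρ y ((((σ x)⁻¹ : kˣ) : k) • Aop ρ x v)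
      = (((σ x)⁻¹ : kˣ) : k) • Aop ρ (y * x) v := by
    intro x
    rw [map_smul, Aop_aop ρ hw]
  rw [Finset.sum_congr rfl fun x _ => h1 x]
  have h2 : ∑ x : ThetaK1 p d, (((σ x)⁻¹ : kˣ) : k) • Aop ρ (y * x) v
      = ((σ y : kˣ) : k) • ∑ x : ThetaK1 p d, (((σ x)⁻¹ : kˣ) : k) • Aop ρ x v := by
    rw [Finset.smul_sum]
    have h3 : ∀ x : ThetaK1 p d,
        ((σ y : kˣ) : k) • ((((σ x)⁻¹ : kˣ) : k) • Aop ρ x v)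
          = (((σ (y⁻¹ * x))⁻¹ : kˣ) : k) • Aop ρ (y * (y⁻¹ * x)) v := by
      intro x
      rw [mul_inv_cancel_left, smul_smul]
      congr 1
      rw [map_mul, map_inv, mul_inv, inv_inv, ← Units.val_mul]
    rw [Finset.sum_congr rfl fun x _ => h3 x]
    refine Fintype.sum_equiv (Equiv.mulLeft y) _ _ fun x => ?_
    show (((σ x)⁻¹ : kˣ) : k) • Aop ρ (y * x) v
        = (((σ (y⁻¹ * (y * x)))⁻¹ : kˣ) : k) • Aop ρ (y * (y⁻¹ * (y * x))) v
    rw [inv_mul_cancel_left]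
  rw [h2, smul_comm]

theorem sum_Pop [Fintype (ThetaK2 k p d)] (hw : IsWeight n ρ)
    (hcard : (Fintype.card (ThetaK1 p d) : k) ≠ 0)
    (hcard2 : Fintype.card (ThetaK2 k p d) = Fintype.card (ThetaK1 p d))
    (hsep : ∀ x : ThetaK1 p d, x ≠ 1 → ∃ σ₀ : ThetaK2 k p d, σ₀ x ≠ 1)
    (v : V) : ∑ σ : ThetaK2 k p d, Pop ρ σ v = v := by
  have h1 : ∀ σ : ThetaK2 k p d, Pop ρ σ v = (Fintype.card (ThetaK1 p d) : k)⁻¹ •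
      ∑ x : ThetaK1 p d, ((σ x⁻¹ : kˣ) : k) • Aop ρ x v := by
    intro σ
    rw [Pop_apply]
    congr 1
    exact Finset.sum_congr rfl fun x _ => by rw [map_inv]
  rw [Finset.sum_congr rfl fun σ _ => h1 σ, ← Finset.smul_sum, Finset.sum_comm]
  have h2 : ∀ x : ThetaK1 p d, ∑ σ : ThetaK2 k p d, ((σ x⁻¹ : kˣ) : k) • Aop ρ x v
      = (∑ σ : ThetaK2 k p d, ((σ x⁻¹ : kˣ) : k)) • Aop ρ x v := by
    intro x
    rw [Finset.sum_smul]
  rw [Finset.sum_congr rfl fun x _ => h2 x,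
    Finset.sum_eq_single_of_mem 1 (Finset.mem_univ _) (fun x _ hx => by
      rw [dualSum (hsep x⁻¹ (by simpa using hx)), zero_smul])]
  have h4 : ∀ σ : ThetaK2 k p d, ((σ (1 : ThetaK1 p d)⁻¹ : kˣ) : k) = 1 := by
    intro σ
    rw [inv_one, map_one, Units.val_one]
  rw [Finset.sum_congr rfl fun σ _ => h4 σ, Finset.sum_const, Finset.card_univ, hcard2,
    Aop_one ρ hw, nsmul_eq_mul, mul_one, smul_smul, inv_mul_cancel₀ hcard, one_smul]

theorem Pop_stable {W : Submodule k V} (hW : RepStable ρ W) {w : V} (hw : w ∈ W)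
    (σ : ThetaK2 k p d) : Pop ρ σ w ∈ W := by
  rw [Pop_apply]
  exact W.smul_mem _ (Submodule.sum_mem W fun x _ =>
    W.smul_mem _ (hW (Heis.mk 1 x 1) w hw))

theorem indep_eig (hcard : (Fintype.card (ThetaK1 p d) : k) ≠ 0)
    {ι : Type} [Fintype ι] {σ : ι → ThetaK2 k p d} (hinj : Function.Injective σ)
    {u : ι → V} (hu : ∀ i, u i ≠ 0) (he : ∀ i, IsEig ρ (σ i) (u i)) :
    LinearIndependent k u := by
  rw [Fintype.linearIndependent_iff]
  intro g hg j
  have h1 : Pop ρ (σ j) (∑ i, g i • u i) = g j • u j := by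
    rw [map_sum]
    rw [Finset.sum_eq_single_of_mem j (Finset.mem_univ _) (fun i _ hij => by
      rw [map_smul, Pop_eig_ne (σ := σ j) (τ := σ i) ρ (he i)
        (fun hh => hij (hinj hh).symm), smul_zero])]
    rw [map_smul, Pop_eig_self ρ hcard (he j)]
  rw [hg, map_zero] at h1
  rcases smul_eq_zero.mp h1.symm with h | h
  · exact h
  · exact absurd h (hu j)

end Stmt6Aux
namespace Stmt6Aux

open Finset

theorem card_torsion (N : ℕ) (hN : N ≠ 0) (n : ℤ) :
    Nat.card {a : Multiplicative (ZMod N) // a ^ n = 1} = Int.gcd n N := by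
  haveI : NeZero N := ⟨hN⟩
  set f : ZMod N →+ ZMod N := AddMonoidHom.mk' (fun b => n • b) (fun a b => smul_add n a b)
    with hf
  have e1 : {a : Multiplicative (ZMod N) // a ^ n = 1} ≃ f.ker := by
    refine Equiv.subtypeEquiv (Multiplicative.toAdd) (fun a => ?_)
    rw [AddMonoidHom.mem_ker]
    show a ^ n = 1 ↔ n • a.toAdd = 0
    constructor
    · intro h
      have h2 := congrArg Multiplicative.toAdd h
      simp only [toAdd_zpow, toAdd_one] at h2
      exact h2
    · intro h
      have h2 : (a ^ n).toAdd = (1 : Multiplicative (ZMod N)).toAdd := by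
        simp only [toAdd_zpow, toAdd_one]
        exact h
      exact Multiplicative.toAdd.injective h2
  have hrange : f.range = AddSubgroup.zmultiples ((n : ℤ) : ZMod N) := by
    ext b
    rw [AddMonoidHom.mem_range, AddSubgroup.mem_zmultiples_iff]
    constructor
    · rintro ⟨a, rfl⟩
      obtain ⟨m, rfl⟩ := ZMod.natCast_zmod_surjective (n := N) a
      refine ⟨(m : ℤ), ?_⟩
      show ((m : ℤ) • ((n : ℤ) : ZMod N)) = f (m : ZMod N)
      rw [hf]
      show (m : ℤ) • ((n : ℤ) : ZMod N) = n • ((m : ℕ) : ZMod N)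
      rw [zsmul_eq_mul, zsmul_eq_mul, Int.cast_natCast, mul_comm]
    · rintro ⟨z, rfl⟩
      refine ⟨(z : ZMod N), ?_⟩
      show n • ((z : ℤ) : ZMod N) = z • ((n : ℤ) : ZMod N)
      rw [zsmul_eq_mul, zsmul_eq_mul, mul_comm]
  have hlag : Nat.card (ZMod N) = Nat.card (ZMod N ⧸ f.ker) * Nat.card f.ker :=
    AddSubgroup.card_eq_card_quotient_mul_card_addSubgroup f.ker
  have hq : Nat.card (ZMod N ⧸ f.ker) = Nat.card f.range :=
    Nat.card_congr (QuotientAddGroup.quotientKerEquivRange f).toEquiv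
  have hrc : Nat.card f.range = N / N.gcd n.natAbs := by
    rw [hrange, Nat.card_zmultiples]
    rcases Int.natAbs_eq n with h | h
    · rw [h, Int.cast_natCast]
      exact ZMod.addOrderOf_coe n.natAbs hN
    · rw [h, Int.cast_neg, Int.cast_natCast, addOrderOf_neg, Int.natAbs_neg, Int.natAbs_natCast]
      exact ZMod.addOrderOf_coe n.natAbs hN
  have hNpos : 0 < N := Nat.pos_of_ne_zero hN
  have hgdvd : N.gcd n.natAbs ∣ N := Nat.gcd_dvd_left N _
  have hgpos : 0 < N.gcd n.natAbs := Nat.gcd_pos_of_pos_left _ hNpos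
  have hdivpos : 0 < N / N.gcd n.natAbs := Nat.div_pos (Nat.le_of_dvd hNpos hgdvd) hgpos
  have key : (N / N.gcd n.natAbs) * Nat.card f.ker = (N / N.gcd n.natAbs) * N.gcd n.natAbs := by
    rw [Nat.div_mul_cancel hgdvd, ← hrc, ← hq, ← hlag, Nat.card_zmod]
  have hker : Nat.card f.ker = N.gcd n.natAbs := Nat.eq_of_mul_eq_mul_left hdivpos key
  rw [Nat.card_congr e1, hker, Int.gcd]
  simp [Nat.gcd_comm]

variable {p : ℕ} {d : Fin p → ℕ}

theorem card_ker_pi (hd : ∀ i, d i ≠ 0) (n : ℤ) :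
    Nat.card {y : ThetaK1 p d // y ^ n = 1} = ∏ i, Int.gcd n (d i) := by
  have e : {y : ThetaK1 p d // y ^ n = 1}
      ≃ ∀ i, {a : Multiplicative (ZMod (d i)) // a ^ n = 1} := by
    refine (Equiv.subtypeEquivRight (fun y => ?_)).trans (Equiv.subtypePiEquivPi)
    constructor
    · intro h i
      exact congrFun h i
    · intro h
      funext i
      exact h i
  rw [Nat.card_congr e, Nat.card_pi]
  exact Finset.prod_congr rfl fun i _ => card_torsion _ (hd i) n

end Stmt6Aux
namespace Stmt6Aux

variable {k : Type} [Field k] {p : ℕ} {d : Fin p → ℕ}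
variable {n : ℤ} {V : Type} [AddCommGroup V] [Module k V]
variable (ρ : Heis k p d →* (V →ₗ[k] V)ˣ)

theorem k2_inv_mul_cancel (χ : ThetaK2 k p d) : χ⁻¹ * χ = 1 :=
  MonoidHom.ext fun y => by simp

theorem k2_mul_comm (χ ψ : ThetaK2 k p d) : χ * ψ = ψ * χ :=
  MonoidHom.ext fun z => by simp [mul_comm]

theorem Bop_ne_zero {χ : ThetaK2 k p d} {v : V} (hv : v ≠ 0) : Bop ρ χ v ≠ 0 := by
  intro h
  apply hv
  have h1 : Bop ρ χ⁻¹ (Bop ρ χ v) = v := by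
    rw [Bop_bop, k2_inv_mul_cancel, Bop_one]
  rw [h, map_zero] at h1
  exact h1.symm

theorem exists_eig_char (hw : IsWeight n ρ) {v : V} (hv : v ≠ 0)
    (h : ∀ x : ThetaK1 p d, ∃ c : k, Aop ρ x v = c • v) :
    ∃ σ : ThetaK2 k p d, IsEig ρ σ v := by
  have hcan : ∀ c c' : k, c • v = c' • v → c = c' := by
    intro c c' hcc
    have : (c - c') • v = 0 := by rw [sub_smul, hcc, sub_self]
    rcases smul_eq_zero.mp this with h0 | h0
    · exact sub_eq_zero.mp h0
    · exact absurd h0 hv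
  set f : ThetaK1 p d → k := fun x => Classical.choose (h x) with hfdef
  have hf : ∀ x, Aop ρ x v = f x • v := fun x => Classical.choose_spec (h x)
  have hfne : ∀ x, f x ≠ 0 := by
    intro x h0
    apply hv
    have h1 : Aop ρ x⁻¹ (Aop ρ x v) = v := by
      rw [Aop_aop ρ hw, inv_mul_cancel, Aop_one ρ hw]
    rw [hf x, h0, zero_smul, map_zero] at h1
    exact h1.symm
  have hmul : ∀ x y, f (x * y) = f x * f y := by
    intro x y
    refine hcan _ _ ?_
    rw [← hf (x * y), ← Aop_aop ρ hw, hf y, map_smul, hf x, smul_smul, mul_comm (f y)]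
  refine ⟨MonoidHom.mk' (fun x => Units.mk0 (f x) (hfne x)) (fun x y => ?_), fun x => ?_⟩
  · exact Units.ext (by simpa using hmul x y)
  · rw [hf x]
    rfl

end Stmt6Aux

open Stmt6Aux

/-- With `G = kˣ × K₁ × K₂` the Heisenberg-type group of type `(d₁,…,d_p)`,
a weight-`n` `G`-module is irreducible if and only if it has dimension
`D_n = (d₁⋯d_p)/(gcd(n,d₁)⋯gcd(n,d_p))`. -/
theorem stmt6 {k : Type} [Field k] [IsAlgClosed k] {p : ℕ} {d : Fin p → ℕ}
    (hd0 : ∀ i, 0 < d i) (hchain : ∀ i j : Fin p, i ≤ j → d i ∣ d j)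
    (hchar : ∀ i, ¬ (ringChar k ∣ d i))
    (n : ℤ) (V : Type) [AddCommGroup V] [Module k V] [FiniteDimensional k V]
    (ρ : Heis k p d →* (V →ₗ[k] V)ˣ)
    (hw : IsWeight n ρ) :
    RepIrred ρ ↔ Module.finrank k V = ThetaD p d n := by
  classical
  haveI hNZ : ∀ i, NeZero (d i) := fun i => ⟨(hd0 i).ne'⟩
  -- the product of the `d i` is invertible in `k`
  have hmk : ((∏ i, d i : ℕ) : k) ≠ 0 := by
    intro h
    rw [CharP.cast_eq_zero_iff k (ringChar k)] at h
    rcases CharP.char_is_prime_or_zero k (ringChar k) with hp | h0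
    · obtain ⟨i, _, hi⟩ := (Nat.Prime.prime hp).exists_mem_finset_dvd h
      exact hchar i hi
    · rw [h0, zero_dvd_iff] at h
      obtain ⟨i, _, h2⟩ := Finset.prod_eq_zero_iff.mp h
      exact absurd h2 (hd0 i).ne'
  have hcardK1 : Nat.card (ThetaK1 p d) = ∏ i, d i := by
    rw [Nat.card_pi]
    exact Finset.prod_congr rfl fun i _ => by
      rw [Nat.card_congr Multiplicative.toAdd, Nat.card_zmod]
  haveI : NeZero ((Monoid.exponent (ThetaK1 p d) : ℕ) : k) := by
    constructor
    intro h
    obtain ⟨c, hc⟩ : Monoid.exponent (ThetaK1 p d) ∣ (∏ i, d i) :=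
      hcardK1 ▸ Group.exponent_dvd_nat_card
    apply hmk
    rw [hc, Nat.cast_mul, h, zero_mul]
  obtain ⟨e⟩ := CommGroup.monoidHom_mulEquiv_of_hasEnoughRootsOfUnity (ThetaK1 p d) k
  haveI : Finite (ThetaK2 k p d) := Finite.of_equiv _ e.symm.toEquiv
  haveI : Fintype (ThetaK2 k p d) := Fintype.ofFinite _
  have hcardK2 : Nat.card (ThetaK2 k p d) = ∏ i, d i := by
    rw [Nat.card_congr e.toEquiv, hcardK1]
  have hcard : (Fintype.card (ThetaK1 p d) : k) ≠ 0 := by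
    rw [← Nat.card_eq_fintype_card, hcardK1]; exact hmk
  have hcard2 : Fintype.card (ThetaK2 k p d) = Fintype.card (ThetaK1 p d) := by
    rw [← Nat.card_eq_fintype_card, ← Nat.card_eq_fintype_card, hcardK1, hcardK2]
  have hsep : ∀ x : ThetaK1 p d, x ≠ 1 → ∃ σ₀ : ThetaK2 k p d, σ₀ x ≠ 1 := fun x hx =>
    CommGroup.exists_apply_ne_one_of_hasEnoughRootsOfUnity (ThetaK1 p d) k hx
  -- the `n`-th power map on `K₂` and its kernel and range
  set Φ : ThetaK2 k p d →* ThetaK2 k p d := zpowGroupHom (α := ThetaK2 k p d) n with hΦ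
  haveI : Fintype Φ.ker := Fintype.ofFinite _
  haveI : Fintype Φ.range := Fintype.ofFinite _
  haveI : Nonempty Φ.range := ⟨1⟩
  have hkercard : Nat.card Φ.ker = ∏ i, Int.gcd n (d i) := by
    have e2 : Φ.ker ≃ {y : ThetaK1 p d // y ^ n = 1} := by
      refine (Equiv.subtypeEquivRight (q := fun χ : ThetaK2 k p d => χ ^ n = 1)
        (fun χ => Iff.rfl)).trans (Equiv.subtypeEquiv e.toEquiv (fun χ => ?_))
      constructor
      · intro h
        show (e χ) ^ n = 1
        rw [← map_zpow, h, map_one]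
      · intro h
        apply e.injective
        rw [map_zpow, map_one]
        exact h
    rw [Nat.card_congr e2, card_ker_pi (fun i => (hd0 i).ne')]
  have hgcdpos : ∀ i : Fin p, 0 < Int.gcd n (d i) := by
    intro i
    rw [Int.gcd_pos_iff]
    exact Or.inr (by exact_mod_cast (hd0 i).ne')
  have hprodpos : 0 < ∏ i, Int.gcd n (d i) := Finset.prod_pos fun i _ => hgcdpos i
  have hrangecard : Nat.card Φ.range = ThetaD p d n := by
    have hlag := Subgroup.card_eq_card_quotient_mul_card_subgroup Φ.ker
    have hq : Nat.card (ThetaK2 k p d ⧸ Φ.ker) = Nat.card Φ.range :=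
      Nat.card_congr (QuotientGroup.quotientKerEquivRange Φ).toEquiv
    have key : Nat.card Φ.range * ∏ i, Int.gcd n (d i) = ∏ i, d i := by
      rw [← hkercard, ← hq, ← hlag, hcardK2]
    rw [ThetaD, ← key, Nat.mul_div_cancel _ hprodpos]
  have hDpos : 0 < ThetaD p d n := by
    rw [← hrangecard]
    exact Nat.card_pos
  -- choice of a preimage for each element of the range of the `n`-th power map
  have hpre : ∀ r : Φ.range, ∃ χ : ThetaK2 k p d, χ ^ n = (r : ThetaK2 k p d) := fun r => r.2
  set χr : Φ.range → ThetaK2 k p d := fun r => Classical.choose (hpre r) with hχrdef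
  have hχr : ∀ r, (χr r) ^ n = (r : ThetaK2 k p d) := fun r => Classical.choose_spec (hpre r)
  constructor
  · -- irreducible → dimension is `ThetaD`
    rintro ⟨⟨v₀, hv₀⟩, hirr⟩
    haveI : Nontrivial V := nontrivial_of_ne v₀ 0 hv₀
    -- a common eigenvector for `K₁` and the kernel of the `n`-th power map
    set LB : List (ThetaK2 k p d) :=
      (Finset.filter (fun χ : ThetaK2 k p d => χ ∈ Φ.ker) Finset.univ).toList with hLB
    set L : List (V →ₗ[k] V) :=
      ((Finset.univ : Finset (ThetaK1 p d)).toList.map (fun x => Aop ρ x)) ++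
      (LB.map (fun χ => Bop ρ χ)) with hL
    have hker_pow : ∀ ν : ThetaK2 k p d, ν ∈ Φ.ker → ∀ z : ThetaK1 p d, (ν z) ^ n = 1 := by
      intro ν hν z
      have h0 : ν ^ n = 1 := hν
      have h1 : (ν ^ n) z = ((1 : ThetaK2 k p d)) z := by rw [h0]
      simpa using h1
    have hcomm : ∀ f ∈ L, ∀ g ∈ L, Commute f g := by
      have hAB : ∀ (x : ThetaK1 p d) (ν : ThetaK2 k p d), ν ∈ Φ.ker →
          Commute (Aop ρ x) (Bop ρ ν) := by
        intro x ν hν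
        refine LinearMap.ext fun v => ?_
        show Aop ρ x (Bop ρ ν v) = Bop ρ ν (Aop ρ x v)
        rw [exchange ρ hw, hker_pow ν hν x, Units.val_one, one_smul]
      have hform : ∀ h ∈ L, (∃ x, h = Aop ρ x) ∨
          ∃ ν, ν ∈ Φ.ker ∧ h = Bop ρ ν := by
        intro h hh
        rw [hL, List.mem_append] at hh
        rcases hh with hh | hh
        · obtain ⟨x, _, rfl⟩ := List.mem_map.mp hh
          exact Or.inl ⟨x, rfl⟩
        · obtain ⟨χ, hχ, rfl⟩ := List.mem_map.mp hh
          rw [hLB, Finset.mem_toList, Finset.mem_filter] at hχ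
          exact Or.inr ⟨χ, hχ.2, rfl⟩
      intro f hf g hg
      have hA : ∀ x y : ThetaK1 p d, Commute (Aop ρ x) (Aop ρ y) := by
        intro x y
        refine LinearMap.ext fun v => ?_
        show Aop ρ x (Aop ρ y v) = Aop ρ y (Aop ρ x v)
        rw [Aop_aop ρ hw, Aop_aop ρ hw, mul_comm]
      have hBB : ∀ χ ψ : ThetaK2 k p d, Commute (Bop ρ χ) (Bop ρ ψ) := by
        intro χ ψ
        refine LinearMap.ext fun v => ?_
        show Bop ρ χ (Bop ρ ψ v) = Bop ρ ψ (Bop ρ χ v)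
        rw [Bop_bop, Bop_bop, k2_mul_comm χ ψ]
      rcases hform f hf with ⟨x, rfl⟩ | ⟨ν, hν, rfl⟩ <;>
        rcases hform g hg with ⟨y, rfl⟩ | ⟨μ, hμ, rfl⟩
      · exact hA x y
      · exact hAB x μ hμ
      · exact (hAB y ν hν).symm
      · exact hBB _ _
    obtain ⟨v, hv, hvspec⟩ := aux_exists_common_eigenvector V L hcomm
    have hA : ∀ x : ThetaK1 p d, ∃ c : k, Aop ρ x v = c • v := fun x =>
      hvspec _ (List.mem_append_left _ (List.mem_map.mpr
        ⟨x, Finset.mem_toList.mpr (Finset.mem_univ _), rfl⟩))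
    have hB : ∀ ν : ThetaK2 k p d, ν ∈ Φ.ker → ∃ c : k, Bop ρ ν v = c • v := fun ν hν =>
      hvspec _ (List.mem_append_right _ (List.mem_map.mpr
        ⟨ν, Finset.mem_toList.mpr (Finset.mem_filter.mpr ⟨Finset.mem_univ _, hν⟩), rfl⟩))
    obtain ⟨σ₀, hσ₀⟩ := exists_eig_char ρ hw hv hA
    -- the span of the `Bop` orbit of `v` is a nonzero stable submodule, hence everything
    set W' : Submodule k V := Submodule.span k (Set.range fun χ : ThetaK2 k p d => Bop ρ χ v)
      with hW'
    have hstab : RepStable ρ W' := by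
      rintro ⟨α, x, χ'⟩ w hw'
      have hgen : ∀ χ : ThetaK2 k p d,
          (ρ (Heis.mk α x χ') : V →ₗ[k] V) (Bop ρ χ v) ∈ W' := by
        intro χ
        rw [rho_decomp ρ hw, exchange ρ hw, hσ₀ x, map_smul, map_smul, map_smul, Bop_bop]
        exact W'.smul_mem _ (W'.smul_mem _ (W'.smul_mem _
          (Submodule.subset_span ⟨χ' * χ, rfl⟩)))
      refine Submodule.span_induction ?_ ?_ ?_ ?_ hw'
      · rintro _ ⟨χ, rfl⟩
        exact hgen χ
      · rw [map_zero]; exact W'.zero_mem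
      · intro a b _ _ ha hb
        rw [map_add]; exact W'.add_mem ha hb
      · intro c a _ ha
        rw [map_smul]; exact W'.smul_mem c ha
    have hvW' : v ∈ W' := Submodule.subset_span ⟨1, Bop_one ρ v⟩
    have hWtop : W' = ⊤ := by
      rcases hirr W' hstab with h | h
      · exact absurd (h ▸ hvW') (by simpa using hv)
      · exact h
    -- the orbit vectors form a basis
    set u : Φ.range → V := fun r => Bop ρ (χr r) v with hu
    have hinj : Function.Injective (fun r : Φ.range => (r : ThetaK2 k p d) * σ₀) := by
      intro r s hrs
      refine Subtype.ext (MonoidHom.ext fun z => ?_)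
      have h1 : (r : ThetaK2 k p d) z * σ₀ z = (s : ThetaK2 k p d) z * σ₀ z :=
        DFunLike.congr_fun hrs z
      exact mul_right_cancel h1
    have hieig : ∀ r : Φ.range, IsEig ρ ((r : ThetaK2 k p d) * σ₀) (u r) := by
      intro r
      have := IsEig.bop ρ hw hσ₀ (χr r)
      rwa [hχr r] at this
    have hu0 : ∀ r, u r ≠ 0 := fun r => Bop_ne_zero ρ hv
    have hli : LinearIndependent k u := indep_eig ρ hcard hinj hu0 hieig
    have hspan : ⊤ ≤ Submodule.span k (Set.range u) := by
      rw [← hWtop, hW']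
      refine Submodule.span_le.mpr ?_
      rintro _ ⟨χ, rfl⟩
      set r : Φ.range := ⟨Φ χ, ⟨χ, rfl⟩⟩ with hr
      have hν : ((χr r)⁻¹ * χ) ∈ Φ.ker := by
        rw [MonoidHom.mem_ker]
        refine MonoidHom.ext fun z => ?_
        show (((χr r)⁻¹ * χ) z) ^ n = 1
        show (((χr r) z)⁻¹ * χ z) ^ n = 1
        rw [mul_zpow, inv_zpow]
        have h1 : (χr r) z ^ n = χ z ^ n := DFunLike.congr_fun (hχr r) z
        rw [h1, inv_mul_cancel]
      obtain ⟨c, hc⟩ := hB _ hν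
      have h2 : χ = χr r * ((χr r)⁻¹ * χ) := by
        refine MonoidHom.ext fun z => ?_
        show χ z = (χr r) z * (((χr r) z)⁻¹ * χ z)
        rw [mul_inv_cancel_left]
      have h3 : Bop ρ χ v = c • u r := by
        conv_lhs => rw [h2]
        rw [← Bop_bop]
        show Bop ρ (χr r) (Bop ρ (((χr r)⁻¹ * χ)) v) = c • u r
        rw [hc, map_smul]
      show Bop ρ χ v ∈ (Submodule.span k (Set.range u) : Set V)
      rw [h3]
      exact Submodule.smul_mem _ _ (Submodule.subset_span ⟨r, rfl⟩)
    let b : Module.Basis Φ.range k V := Module.Basis.mk hli hspan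
    rw [Module.finrank_eq_card_basis b, ← Nat.card_eq_fintype_card, hrangecard]
  · -- dimension `ThetaD` → irreducible
    intro hfr
    haveI : Nontrivial V := Module.finrank_pos_iff.mp (hfr ▸ hDpos)
    constructor
    · obtain ⟨v, hv⟩ := exists_ne (0 : V)
      exact ⟨v, hv⟩
    · intro W hWst
      by_cases hbot : W = ⊥
      · left; exact hbot
      · right
        obtain ⟨w₀, hw₀W, hw₀⟩ := W.ne_bot_iff.mp hbot
        have hsum := sum_Pop ρ hw hcard hcard2 hsep w₀
        have hex : ∃ σ₀ : ThetaK2 k p d, Pop ρ σ₀ w₀ ≠ 0 := by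
          by_contra hno
          push_neg at hno
          rw [Finset.sum_eq_zero (fun σ _ => hno σ)] at hsum
          exact hw₀ hsum.symm
        obtain ⟨σ₀, hP0⟩ := hex
        set w := Pop ρ σ₀ w₀ with hwdef
        have hwW : w ∈ W := Pop_stable ρ hWst hw₀W σ₀
        have hweig : IsEig ρ σ₀ w := Pop_eig ρ hw σ₀ w₀
        set u : Φ.range → V := fun r => Bop ρ (χr r) w with hu
        have hinj : Function.Injective (fun r : Φ.range => (r : ThetaK2 k p d) * σ₀) := by
          intro r s hrs
          refine Subtype.ext (MonoidHom.ext fun z => ?_)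
          have h1 : (r : ThetaK2 k p d) z * σ₀ z = (s : ThetaK2 k p d) z * σ₀ z :=
            DFunLike.congr_fun hrs z
          exact mul_right_cancel h1
        have hieig : ∀ r : Φ.range, IsEig ρ ((r : ThetaK2 k p d) * σ₀) (u r) := by
          intro r
          have := IsEig.bop ρ hw hweig (χr r)
          rwa [hχr r] at this
        have hu0 : ∀ r, u r ≠ 0 := fun r => Bop_ne_zero ρ hP0
        have hli : LinearIndependent k u := indep_eig ρ hcard hinj hu0 hieig
        have hcardeq : Fintype.card Φ.range = Module.finrank k V := by
          rw [← Nat.card_eq_fintype_card, hrangecard, hfr]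
        have hsp := hli.span_eq_top_of_card_eq_finrank hcardeq
        have huW : ∀ r, u r ∈ W := fun r => hWst (Heis.mk 1 1 (χr r)) w hwW
        rw [eq_top_iff, ← hsp]
        refine Submodule.span_le.mpr ?_
        rintro _ ⟨r, rfl⟩
        exact huW r
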